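/- Under the same hypotheses as the general cross approximation error bound, the index sets I, J of cardinality m produced by cross approximation with complete pivoting satisfy ‖A − A(:,J)A(I,J)^{-1}A(I,:)‖_max ≤ 2^{2m+1} · ρ_m · γ_m(A), where γ_m(A) = min{‖E‖_max : rank(A+E) ≤ m}. -/

import Mathlib

/-- The singular values of a real matrix: square roots of the eigenvalues of `AᴴA`. -/
noncomputable def svals {n m : ℕ} (A : Matrix (Fin n) (Fin m) ℝ) : Fin m → ℝ :=
  fun i => Real.sqrt ((Matrix.isHermitian_conjTranspose_mul_self A).eigenvalues i)

/-- `sigma A k` is the `k`-th largest singular value of `A` (1-indexed). -/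
noncomputable def sigma {n : ℕ} (A : Matrix (Fin n) (Fin n) ℝ) (k : ℕ) : ℝ :=
  (Multiset.sort (Multiset.map (svals A) Finset.univ.val) (· ≤ ·)).getD (n - k) 0

/-- The entrywise maximum norm of a matrix. -/
noncomputable def maxNorm {n m : ℕ} (E : Matrix (Fin n) (Fin m) ℝ) : ℝ :=
  ⨆ i, ⨆ j, |E i j|

/-- `CrossApproxSeq A m R i j` records a run of `m` steps of cross approximation
with complete pivoting on `A`: `R 0 = A`, and at each step `k < m` the pivot
`(i k, j k)` is a nonzero entry of maximal absolute value of the residual `R k`,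
which is then updated by subtracting the corresponding rank-one cross. -/
def CrossApproxSeq {n : ℕ} (A : Matrix (Fin n) (Fin n) ℝ) (m : ℕ)
    (R : ℕ → Matrix (Fin n) (Fin n) ℝ) (i j : ℕ → Fin n) : Prop :=
  R 0 = A ∧ ∀ k < m,
    R k (i k) (j k) ≠ 0 ∧
    (∀ a b : Fin n, |R k a b| ≤ |R k (i k) (j k)|) ∧
    R (k + 1) =
      R k - (R k (i k) (j k))⁻¹ • Matrix.of (fun a b => R k a (j k) * R k (i k) b)

section MaxNorm
variable {n m : ℕ} (E : Matrix (Fin n) (Fin m) ℝ)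

lemma maxNorm_nonneg : 0 ≤ maxNorm E :=
  Real.iSup_nonneg fun _ => Real.iSup_nonneg fun _ => abs_nonneg _

lemma abs_le_maxNorm (a : Fin n) (b : Fin m) : |E a b| ≤ maxNorm E := by
  have h1 : |E a b| ≤ ⨆ j, |E a j| :=
    le_ciSup (f := fun j => |E a j|) (Set.Finite.bddAbove (Set.finite_range _)) b
  exact h1.trans (le_ciSup (f := fun a => ⨆ j, |E a j|)
    (Set.Finite.bddAbove (Set.finite_range _)) a)

lemma maxNorm_le {c : ℝ} (hc : 0 ≤ c) (h : ∀ a b, |E a b| ≤ c) : maxNorm E ≤ c :=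
  Real.iSup_le (fun a => Real.iSup_le (h a) hc) hc

lemma exists_maxNorm_eq (hn : 0 < n) (hm : 0 < m) : ∃ a b, maxNorm E = |E a b| := by
  have : Nonempty (Fin n × Fin m) := ⟨⟨⟨0, hn⟩, ⟨0, hm⟩⟩⟩
  obtain ⟨⟨a, b⟩, hab⟩ := Finite.exists_max (fun p : Fin n × Fin m => |E p.1 p.2|)
  exact ⟨a, b, le_antisymm (maxNorm_le E (abs_nonneg _) fun a' b' => hab (a', b'))
    (abs_le_maxNorm E a b)⟩

end MaxNorm

section Run
variable {n q : ℕ} {B : Matrix (Fin n) (Fin n) ℝ} {R : ℕ → Matrix (Fin n) (Fin n) ℝ}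
  {i j : ℕ → Fin n}

lemma pivot_ne (h : CrossApproxSeq B q R i j) {k : ℕ} (hk : k < q) : R k (i k) (j k) ≠ 0 := ((h.2 k hk).1)

lemma pivot_max (h : CrossApproxSeq B q R i j) {k : ℕ} (hk : k < q) (a b : Fin n) :
    |R k a b| ≤ |R k (i k) (j k)| := ((h.2 k hk).2.1 a b)

lemma step_eq (h : CrossApproxSeq B q R i j) {k : ℕ} (hk : k < q) (a b : Fin n) :
    R (k + 1) a b = R k a b - (R k (i k) (j k))⁻¹ * (R k a (j k) * R k (i k) b) := by
  have := (h.2 k hk).2.2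
  rw [this]; simp [Matrix.sub_apply, Matrix.smul_apply, smul_eq_mul]

/-- rows killed: for t < k ≤ q, row `i t` of `R k` vanishes. -/
lemma row_zero (h : CrossApproxSeq B q R i j) {t k : ℕ} (ht : t < k) (hk : k ≤ q) (b : Fin n) : R k (i t) b = 0 := by
  induction k generalizing b with
  | zero => omega
  | succ k ih =>
    have hkq : k < q := by omega
    rcases Nat.lt_or_ge t k with htk | htk
    · simp [step_eq h hkq, ih htk (by omega)]
    · have htk' : t = k := by omega
      subst htk'
      rw [step_eq h hkq]
      field_simp [pivot_ne h hkq]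
      ring

lemma col_zero (h : CrossApproxSeq B q R i j) {t k : ℕ} (ht : t < k) (hk : k ≤ q) (a : Fin n) : R k a (j t) = 0 := by
  induction k generalizing a with
  | zero => omega
  | succ k ih =>
    have hkq : k < q := by omega
    rcases Nat.lt_or_ge t k with htk | htk
    · simp [step_eq h hkq, ih htk (by omega)]
    · have htk' : t = k := by omega
      subst htk'
      rw [step_eq h hkq]
      field_simp [pivot_ne h hkq]
      ring

/-- telescoping identity -/
lemma telescope (h : CrossApproxSeq B q R i j) {k : ℕ} (hk : k ≤ q) (a b : Fin n) :
    B a b = R k a b +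
      ∑ t ∈ Finset.range k, (R t (i t) (j t))⁻¹ * (R t a (j t) * R t (i t) b) := by
  induction k with
  | zero => simp [h.1]
  | succ k ih =>
    rw [Finset.sum_range_succ, step_eq h (by omega)]
    have := ih (by omega)
    linarith

section CUR
variable {n q : ℕ} {B : Matrix (Fin n) (Fin n) ℝ} {R : ℕ → Matrix (Fin n) (Fin n) ℝ}
  {i j : ℕ → Fin n}

/-- the product V*U of the accumulated cross vectors equals `B - R q`. -/
lemma VU_eq (h : CrossApproxSeq B q R i j) (a b : Fin n) :
    (Matrix.of (fun (a : Fin n) (t : Fin q) =>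
        (R t.1 (i t.1) (j t.1))⁻¹ * R t.1 a (j t.1)) *
      Matrix.of (fun (t : Fin q) (b : Fin n) => R t.1 (i t.1) b)) a b
      = B a b - R q a b := by
  have := telescope h (le_refl q) a b
  rw [Matrix.mul_apply]
  have hs : ∑ t : Fin q, (Matrix.of (fun (a : Fin n) (t : Fin q) =>
        (R t.1 (i t.1) (j t.1))⁻¹ * R t.1 a (j t.1))) a t *
        (Matrix.of (fun (t : Fin q) (b : Fin n) => R t.1 (i t.1) b)) t b
      = ∑ t ∈ Finset.range q, (R t (i t) (j t))⁻¹ * (R t a (j t) * R t (i t) b) := by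
    rw [← Fin.sum_univ_eq_sum_range]
    exact Finset.sum_congr rfl fun t _ => by simp [Matrix.of_apply, mul_assoc]
  rw [hs]; linarith

lemma Ujm_det (h : CrossApproxSeq B q R i j) :
    IsUnit (Matrix.of (fun (t s : Fin q) => R t.1 (i t.1) (j s.1))).det := by
  have htri : (Matrix.of (fun (t s : Fin q) => R t.1 (i t.1) (j s.1))).BlockTriangular id := by
    intro s t hts
    exact col_zero h (k := s.1) hts (le_of_lt s.2) _
  rw [Matrix.det_of_upperTriangular htri]
  rw [isUnit_iff_ne_zero]
  exact Finset.prod_ne_zero_iff.2 fun t _ => pivot_ne h t.2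

lemma Lm_det (h : CrossApproxSeq B q R i j) :
    (Matrix.of (fun (s t : Fin q) =>
      (R t.1 (i t.1) (j t.1))⁻¹ * R t.1 (i s.1) (j t.1))).det = 1 := by
  have htri : (Matrix.of (fun (s t : Fin q) =>
      (R t.1 (i t.1) (j t.1))⁻¹ * R t.1 (i s.1) (j t.1))).BlockTriangular
      OrderDual.toDual := by
    intro s t hts
    have : R t.1 (i s.1) (j t.1) = 0 := row_zero h (t := s.1) (k := t.1) hts (le_of_lt t.2) _
    simp [this]
  rw [Matrix.det_of_lowerTriangular _ htri]
  refine Finset.prod_eq_one fun t _ => ?_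
  simp [inv_mul_cancel₀ (pivot_ne h t.2)]

/-- the pivot block is invertible -/
lemma pivot_submatrix_isUnit (h : CrossApproxSeq B q R i j) :
    IsUnit ((B.submatrix (fun t : Fin q => i t.1) (fun t : Fin q => j t.1)).det) := by
  have hP : B.submatrix (fun t : Fin q => i t.1) (fun t : Fin q => j t.1) =
      Matrix.of (fun (s t : Fin q) =>
        (R t.1 (i t.1) (j t.1))⁻¹ * R t.1 (i s.1) (j t.1)) *
      Matrix.of (fun (t s : Fin q) => R t.1 (i t.1) (j s.1)) := by
    ext s t
    rw [Matrix.mul_apply]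
    have : ∀ u : Fin q, (Matrix.of fun (s t : Fin q) =>
        (R t.1 (i t.1) (j t.1))⁻¹ * R t.1 (i s.1) (j t.1)) s u *
        (Matrix.of fun (t s : Fin q) => R t.1 (i t.1) (j s.1)) u t
        = (Matrix.of (fun (a : Fin n) (u : Fin q) =>
        (R u.1 (i u.1) (j u.1))⁻¹ * R u.1 a (j u.1))) (i s.1) u *
        (Matrix.of (fun (u : Fin q) (b : Fin n) => R u.1 (i u.1) b)) u (j t.1) := by
      intro u; simp [Matrix.of_apply]
    rw [Finset.sum_congr rfl fun u _ => this u, ← Matrix.mul_apply, VU_eq h]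
    have : R q (i s.1) (j t.1) = 0 := row_zero h s.2 (le_refl q) _
    simp [Matrix.submatrix_apply, this]
  rw [hP, Matrix.det_mul]
  exact (isUnit_iff_ne_zero.2 (by rw [Lm_det h]; norm_num)).mul (Ujm_det h)

/-- the CUR identity -/
lemma cross_identity (h : CrossApproxSeq B q R i j) :
    B.submatrix id (fun t : Fin q => j t.1) *
      (B.submatrix (fun t : Fin q => i t.1) (fun t : Fin q => j t.1))⁻¹ *
      B.submatrix (fun t : Fin q => i t.1) id = B - R q := by
  set Vm : Matrix (Fin n) (Fin q) ℝ := Matrix.of (fun (a : Fin n) (t : Fin q) =>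
      (R t.1 (i t.1) (j t.1))⁻¹ * R t.1 a (j t.1)) with hVm
  set Um : Matrix (Fin q) (Fin n) ℝ := Matrix.of (fun (t : Fin q) (b : Fin n) =>
      R t.1 (i t.1) b) with hUm
  set Lm : Matrix (Fin q) (Fin q) ℝ := Matrix.of (fun (s t : Fin q) =>
      (R t.1 (i t.1) (j t.1))⁻¹ * R t.1 (i s.1) (j t.1)) with hLm
  set Ujm : Matrix (Fin q) (Fin q) ℝ := Matrix.of (fun (t s : Fin q) =>
      R t.1 (i t.1) (j s.1)) with hUjm
  have hLU : Lm = Matrix.of (fun (s t : Fin q) => Vm (i s.1) t) := by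
    ext s t; simp [hLm, hVm, Matrix.of_apply]
  have hUjU : Ujm = Matrix.of (fun (t s : Fin q) => Um t (j s.1)) := by
    ext t s; simp [hUjm, hUm, Matrix.of_apply]
  have hC : B.submatrix id (fun t : Fin q => j t.1) = Vm * Ujm := by
    ext a s
    rw [Matrix.mul_apply]
    have : ∀ u : Fin q, Vm a u * Ujm u s = Vm a u * Um u (j s.1) := by
      intro u; rw [hUjU]; rfl
    rw [Finset.sum_congr rfl fun u _ => this u, ← Matrix.mul_apply, VU_eq h]
    have : R q a (j s.1) = 0 := col_zero h s.2 (le_refl q) _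
    simp [Matrix.submatrix_apply, this]
  have hRr : B.submatrix (fun t : Fin q => i t.1) id = Lm * Um := by
    ext s b
    rw [Matrix.mul_apply]
    have : ∀ u : Fin q, Lm s u * Um u b = Vm (i s.1) u * Um u b := by
      intro u; rw [hLU]; rfl
    rw [Finset.sum_congr rfl fun u _ => this u, ← Matrix.mul_apply, VU_eq h]
    have : R q (i s.1) b = 0 := row_zero h s.2 (le_refl q) _
    simp [Matrix.submatrix_apply, this]
  have hP : B.submatrix (fun t : Fin q => i t.1) (fun t : Fin q => j t.1) = Lm * Ujm := by
    ext s t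
    rw [Matrix.mul_apply]
    have : ∀ u : Fin q, Lm s u * Ujm u t = Vm (i s.1) u * Um u (j t.1) := by
      intro u; rw [hLU, hUjU]; rfl
    rw [Finset.sum_congr rfl fun u _ => this u, ← Matrix.mul_apply, VU_eq h]
    have : R q (i s.1) (j t.1) = 0 := row_zero h s.2 (le_refl q) _
    simp [Matrix.submatrix_apply, this]
  have hUjdet : IsUnit Ujm.det := Ujm_det h
  have hLdet : IsUnit Lm.det := isUnit_iff_ne_zero.2 (by rw [Lm_det h]; norm_num)
  have hVUm : Vm * Um = B - R q := by
    ext a b; rw [VU_eq h]; simp [Matrix.sub_apply]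
  rw [hC, hRr, hP, Matrix.mul_inv_rev]
  have : Vm * Ujm * (Ujm⁻¹ * Lm⁻¹) * (Lm * Um) = Vm * (Ujm * Ujm⁻¹) * ((Lm⁻¹ * Lm) * Um) := by
    simp only [Matrix.mul_assoc]
  rw [this, Matrix.mul_nonsing_inv _ hUjdet, Matrix.nonsing_inv_mul _ hLdet,
    Matrix.mul_one, Matrix.one_mul, hVUm]

end CUR

section Analysis

lemma geom2 (r : ℕ) : ∑ t ∈ Finset.range r, (2:ℝ)^t = 2^r - 1 := by
  induction r with
  | zero => simp
  | succ r ih => rw [Finset.sum_range_succ, ih]; ring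

lemma sum_pow_four_le (m : ℕ) : ∑ q ∈ Finset.range (m+1), (4:ℝ)^q ≤ 2 * 4^m := by
  induction m with
  | zero => norm_num
  | succ m ih =>
    rw [Finset.sum_range_succ]
    have : (4:ℝ)^(m+1) = 4 * 4^m := by ring
    rw [this]
    have h4 : (0:ℝ) < 4^m := by positivity
    nlinarith [ih, h4]

lemma geomIoo {s q' : ℕ} (h : s < q') :
    ∑ q ∈ Finset.Ioo s q', (2:ℝ)^(q' - q - 1) = 2^(q' - s - 1) - 1 := by
  induction q' with
  | zero => omega
  | succ q' ih =>
    rcases Nat.lt_or_ge s q' with hs | hs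
    · have hins : Finset.Ioo s (q'+1) = insert q' (Finset.Ioo s q') := by
        ext x; simp [Finset.mem_Ioo, Finset.mem_insert]; omega
      rw [hins, Finset.sum_insert (by simp [Finset.mem_Ioo])]
      have h1 : ∀ q ∈ Finset.Ioo s q', (2:ℝ)^(q'+1-q-1) = 2 * 2^(q'-q-1) := by
        intro q hq
        rw [Finset.mem_Ioo] at hq
        rw [← pow_succ']
        congr 1; omega
      rw [Finset.sum_congr rfl h1, ← Finset.mul_sum, ih hs]
      have h2 : q' + 1 - s - 1 = (q' - s - 1) + 1 := by omega
      have h3 : q' + 1 - q' - 1 = 0 := by omega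
      rw [h2, h3, pow_succ]
      ring
    · have hins : Finset.Ioo s (q'+1) = ∅ := by
        ext x; simp [Finset.mem_Ioo]; omega
      have h2 : q' + 1 - s - 1 = 0 := by omega
      rw [hins, h2]
      norm_num

/-- forward substitution bound for a unit lower triangular system -/
lemma forward_bound (N : ℕ) (Lf : ℕ → ℕ → ℝ) (zv yv : ℕ → ℝ) (cX : ℝ)
    (hcX : 0 ≤ cX)
    (hLdiag : ∀ r < N, Lf r r = 1)
    (hLup : ∀ r t, r < t → t < N → Lf r t = 0)
    (hLbd : ∀ r t, r < N → t < N → |Lf r t| ≤ 1)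
    (hy : ∀ r < N, ∑ t ∈ Finset.range N, Lf r t * zv t = yv r)
    (hybd : ∀ r < N, |yv r| ≤ cX) :
    ∀ r < N, |zv r| ≤ 2^r * cX := by
  intro r
  induction r using Nat.strong_induction_on with
  | _ r ih =>
    intro hr
    have hshrink : ∑ t ∈ Finset.range N, Lf r t * zv t
        = ∑ t ∈ Finset.range (r+1), Lf r t * zv t := by
      refine (Finset.sum_subset (Finset.range_subset_range.2 hr) ?_).symm
      intro t ht hts
      rw [Finset.mem_range] at ht
      rw [Finset.mem_range] at hts
      rw [hLup r t (by omega) ht, zero_mul]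
    have hsplit : ∑ t ∈ Finset.range (r+1), Lf r t * zv t
        = (∑ t ∈ Finset.range r, Lf r t * zv t) + zv r := by
      rw [Finset.sum_range_succ, hLdiag r hr, one_mul]
    have hzr : zv r = yv r - ∑ t ∈ Finset.range r, Lf r t * zv t := by
      have := hy r hr
      rw [hshrink, hsplit] at this
      linarith
    have hsum : |∑ t ∈ Finset.range r, Lf r t * zv t|
        ≤ ∑ t ∈ Finset.range r, (2:ℝ)^t * cX := by
      refine (Finset.abs_sum_le_sum_abs _ _).trans ?_
      refine Finset.sum_le_sum fun t ht => ?_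
      rw [Finset.mem_range] at ht
      rw [abs_mul]
      calc |Lf r t| * |zv t| ≤ 1 * |zv t| := by
            apply mul_le_mul_of_nonneg_right (hLbd r t hr (by omega)) (abs_nonneg _)
        _ = |zv t| := one_mul _
        _ ≤ 2^t * cX := ih t ht (by omega)
    have : ∑ t ∈ Finset.range r, (2:ℝ)^t * cX = (2^r - 1) * cX := by
      rw [← Finset.sum_mul, geom2]
    rw [this] at hsum
    rw [hzr]
    calc |yv r - ∑ t ∈ Finset.range r, Lf r t * zv t|
        ≤ |yv r| + |∑ t ∈ Finset.range r, Lf r t * zv t| := abs_sub _ _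
      _ ≤ cX + (2^r - 1) * cX := add_le_add (hybd r hr) hsum
      _ = 2^r * cX := by ring

end Analysis

section Analysis2

/-- backward substitution bound for an upper triangular system with dominant diagonal rows -/
lemma backward_bound (N : ℕ) (Uf : ℕ → ℕ → ℝ) (pv xv zv : ℕ → ℝ)
    (hUlow : ∀ s q, q < s → s < N → Uf s q = 0)
    (hUdiag : ∀ s < N, Uf s s = pv s)
    (hUbd : ∀ s q, s < N → q < N → |Uf s q| ≤ |pv s|)
    (hpv : ∀ s < N, pv s ≠ 0)
    (hz : ∀ s < N, zv s = ∑ q ∈ Finset.range N, Uf s q * xv q) :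
    ∀ s < N, |xv s| ≤ |zv s| / |pv s|
      + ∑ q ∈ Finset.Ioo s N, 2^(q - s - 1) * (|zv q| / |pv q|) := by
  suffices H : ∀ d s, s < N → N - s ≤ d → |xv s| ≤ |zv s| / |pv s|
      + ∑ q ∈ Finset.Ioo s N, 2^(q - s - 1) * (|zv q| / |pv q|) by
    intro s hs; exact H (N - s) s hs le_rfl
  intro d
  induction d with
  | zero => intro s hs hd; omega
  | succ d ih =>
    intro s hs hd
    have hpvs : (0:ℝ) < |pv s| := abs_pos.2 (hpv s hs)
    -- split the equation for zv s
    have hshrink : ∑ q ∈ Finset.range N, Uf s q * xv q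
        = ∑ q ∈ Finset.Ico s N, Uf s q * xv q := by
      refine (Finset.sum_subset ?_ ?_).symm
      · intro x hx; rw [Finset.mem_Ico] at hx; exact Finset.mem_range.2 hx.2
      · intro x hx hx2
        rw [Finset.mem_range] at hx
        rw [Finset.mem_Ico] at hx2
        rw [hUlow s x (by omega) hs, zero_mul]
    have hins : Finset.Ico s N = insert s (Finset.Ioo s N) := by
      ext x; simp [Finset.mem_Ico, Finset.mem_Ioo, Finset.mem_insert]; omega
    have hsplit : zv s = pv s * xv s + ∑ q ∈ Finset.Ioo s N, Uf s q * xv q := by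
      rw [hz s hs, hshrink, hins, Finset.sum_insert (by simp [Finset.mem_Ioo]),
        hUdiag s hs]
    have hxs : pv s * xv s = zv s - ∑ q ∈ Finset.Ioo s N, Uf s q * xv q := by
      linarith
    have habs : |pv s| * |xv s| ≤ |zv s| + |pv s| * ∑ q ∈ Finset.Ioo s N, |xv q| := by
      rw [← abs_mul, hxs]
      refine (abs_sub _ _).trans ?_
      refine add_le_add le_rfl ?_
      refine (Finset.abs_sum_le_sum_abs _ _).trans ?_
      rw [Finset.mul_sum]
      refine Finset.sum_le_sum fun q hq => ?_
      rw [Finset.mem_Ioo] at hq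
      rw [abs_mul]
      exact mul_le_mul_of_nonneg_right (hUbd s q hs hq.2) (abs_nonneg _)
    have hstep : |xv s| ≤ |zv s| / |pv s| + ∑ q ∈ Finset.Ioo s N, |xv q| := by
      rw [div_add' _ _ _ (ne_of_gt hpvs), le_div_iff₀ hpvs]
      calc |xv s| * |pv s| = |pv s| * |xv s| := by ring
        _ ≤ |zv s| + |pv s| * ∑ q ∈ Finset.Ioo s N, |xv q| := habs
        _ = |zv s| + (∑ q ∈ Finset.Ioo s N, |xv q|) * |pv s| := by ring
    -- apply induction hypothesis to each q in Ioo s N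
    have hih : ∀ q ∈ Finset.Ioo s N, |xv q| ≤ |zv q| / |pv q|
        + ∑ q' ∈ Finset.Ioo q N, 2^(q' - q - 1) * (|zv q'| / |pv q'|) := by
      intro q hq
      rw [Finset.mem_Ioo] at hq
      exact ih q hq.2 (by omega)
    have hdouble : ∑ q ∈ Finset.Ioo s N, (|zv q| / |pv q|
        + ∑ q' ∈ Finset.Ioo q N, 2^(q' - q - 1) * (|zv q'| / |pv q'|))
        = ∑ q ∈ Finset.Ioo s N, 2^(q - s - 1) * (|zv q| / |pv q|) := by
      rw [Finset.sum_add_distrib]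
      have hswap : ∑ q ∈ Finset.Ioo s N, ∑ q' ∈ Finset.Ioo q N,
          2^(q' - q - 1) * (|zv q'| / |pv q'|)
          = ∑ q' ∈ Finset.Ioo s N, (2^(q' - s - 1) - 1) * (|zv q'| / |pv q'|) := by
        have h1 : ∀ q ∈ Finset.Ioo s N, ∑ q' ∈ Finset.Ioo q N,
            2^(q' - q - 1) * (|zv q'| / |pv q'|)
            = ∑ q' ∈ Finset.Ioo s N, if q < q' then
              2^(q' - q - 1) * (|zv q'| / |pv q'|) else 0 := by
          intro q hq
          rw [Finset.mem_Ioo] at hq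
          rw [← Finset.sum_filter]
          congr 1
          ext x; simp [Finset.mem_Ioo, Finset.mem_filter]; omega
        rw [Finset.sum_congr rfl h1, Finset.sum_comm]
        refine Finset.sum_congr rfl fun q' hq' => ?_
        rw [Finset.mem_Ioo] at hq'
        have h2 : ∑ q ∈ Finset.Ioo s N, (if q < q' then
            2^(q' - q - 1) * (|zv q'| / |pv q'|) else 0)
            = ∑ q ∈ Finset.Ioo s q', 2^(q' - q - 1) * (|zv q'| / |pv q'|) := by
          rw [← Finset.sum_filter]
          congr 1
          ext x; simp [Finset.mem_Ioo, Finset.mem_filter]; omega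
        rw [h2, ← Finset.sum_mul, geomIoo hq'.1]
      rw [hswap, ← Finset.sum_add_distrib]
      refine Finset.sum_congr rfl fun q hq => ?_
      ring
    calc |xv s| ≤ |zv s| / |pv s| + ∑ q ∈ Finset.Ioo s N, |xv q| := hstep
      _ ≤ |zv s| / |pv s| + ∑ q ∈ Finset.Ioo s N, (|zv q| / |pv q|
          + ∑ q' ∈ Finset.Ioo q N, 2^(q' - q - 1) * (|zv q'| / |pv q'|)) := by
        refine add_le_add le_rfl (Finset.sum_le_sum hih)
      _ = |zv s| / |pv s| + ∑ q ∈ Finset.Ioo s N, 2^(q - s - 1) * (|zv q| / |pv q|) := by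
        rw [hdouble]

/-- total ℓ¹ bound -/
lemma total_bound (N : ℕ) (pv xv zv : ℕ → ℝ)
    (hbd : ∀ s < N, |xv s| ≤ |zv s| / |pv s|
      + ∑ q ∈ Finset.Ioo s N, 2^(q - s - 1) * (|zv q| / |pv q|)) :
    ∑ s ∈ Finset.range N, |xv s| ≤ ∑ q ∈ Finset.range N, 2^q * (|zv q| / |pv q|) := by
  have h1 : ∑ s ∈ Finset.range N, |xv s| ≤ ∑ s ∈ Finset.range N, (|zv s| / |pv s|
      + ∑ q ∈ Finset.Ioo s N, 2^(q - s - 1) * (|zv q| / |pv q|)) := by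
    refine Finset.sum_le_sum fun s hs => hbd s (Finset.mem_range.1 hs)
  refine h1.trans (le_of_eq ?_)
  rw [Finset.sum_add_distrib]
  have hswap : ∑ s ∈ Finset.range N, ∑ q ∈ Finset.Ioo s N,
      2^(q - s - 1) * (|zv q| / |pv q|)
      = ∑ q ∈ Finset.range N, (2^q - 1) * (|zv q| / |pv q|) := by
    have h2 : ∀ s ∈ Finset.range N, ∑ q ∈ Finset.Ioo s N,
        2^(q - s - 1) * (|zv q| / |pv q|)
        = ∑ q ∈ Finset.range N, if s < q then 2^(q - s - 1) * (|zv q| / |pv q|) else 0 := by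
      intro s hs
      rw [← Finset.sum_filter]
      congr 1
      ext x; simp [Finset.mem_Ioo, Finset.mem_filter, Finset.mem_range]; omega
    rw [Finset.sum_congr rfl h2, Finset.sum_comm]
    refine Finset.sum_congr rfl fun q hq => ?_
    rw [Finset.mem_range] at hq
    have h3 : ∑ s ∈ Finset.range N, (if s < q then 2^(q - s - 1) * (|zv q| / |pv q|) else 0)
        = ∑ s ∈ Finset.range q, 2^(q - s - 1) * (|zv q| / |pv q|) := by
      rw [← Finset.sum_filter]
      congr 1
      ext x; simp [Finset.mem_filter, Finset.mem_range]; omega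
    rw [h3, ← Finset.sum_mul]
    have h4 : ∑ s ∈ Finset.range q, (2:ℝ)^(q - s - 1) = 2^q - 1 := by
      have h5 : ∀ s ∈ Finset.range q, (2:ℝ)^(q - s - 1) = (fun d => (2:ℝ)^d) (q - 1 - s) := by
        intro s hs; rw [Finset.mem_range] at hs
        simp only []
        congr 1; omega
      rw [Finset.sum_congr rfl h5, Finset.sum_range_reflect (fun d => (2:ℝ)^d) q, geom2]
    rw [h4]
  rw [hswap, ← Finset.sum_add_distrib]
  refine Finset.sum_congr rfl fun q hq => ?_
  ring

end Analysis2

/-- The worst-case growth factor `ρ_m` of complete pivoting: the supremum over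
all matrices of rank at least `m` of `‖A^{(m)}‖_max / ‖A‖_max`, where `A^{(m)}`
is the residual (Schur complement) after `m` steps of complete pivoting. -/
noncomputable def growthFactor (m : ℕ) : ℝ :=
  sSup {r | ∃ (n : ℕ) (A : Matrix (Fin n) (Fin n) ℝ)
      (R : ℕ → Matrix (Fin n) (Fin n) ℝ) (i j : ℕ → Fin n),
      m ≤ A.rank ∧ CrossApproxSeq A m R i j ∧ r = maxNorm (R m) / maxNorm A}


section Growth

lemma maxNorm_step {n q : ℕ} {B : Matrix (Fin n) (Fin n) ℝ}
    {R : ℕ → Matrix (Fin n) (Fin n) ℝ} {i j : ℕ → Fin n}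
    (h : CrossApproxSeq B q R i j) {k : ℕ} (hk : k < q) :
    maxNorm (R (k+1)) ≤ 2 * maxNorm (R k) := by
  refine maxNorm_le _ (by linarith [maxNorm_nonneg (R k)]) fun a b => ?_
  rw [step_eq h hk]
  have hpv : (0:ℝ) < |R k (i k) (j k)| := abs_pos.2 (pivot_ne h hk)
  have h1 : |(R k (i k) (j k))⁻¹ * (R k a (j k) * R k (i k) b)| ≤ maxNorm (R k) := by
    rw [abs_mul, abs_mul, abs_inv]
    have h2 : |R k a (j k)| ≤ |R k (i k) (j k)| := pivot_max h hk a (j k)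
    have h3 : |R k (i k) b| ≤ maxNorm (R k) := abs_le_maxNorm _ _ _
    calc |R k (i k) (j k)|⁻¹ * (|R k a (j k)| * |R k (i k) b|)
        ≤ |R k (i k) (j k)|⁻¹ * (|R k (i k) (j k)| * maxNorm (R k)) := by
          apply mul_le_mul_of_nonneg_left _ (by positivity)
          exact mul_le_mul h2 h3 (abs_nonneg _) (abs_nonneg _)
      _ = maxNorm (R k) := by field_simp
  calc |R k a b - (R k (i k) (j k))⁻¹ * (R k a (j k) * R k (i k) b)|
      ≤ |R k a b| + |(R k (i k) (j k))⁻¹ * (R k a (j k) * R k (i k) b)| := abs_sub _ _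
    _ ≤ maxNorm (R k) + maxNorm (R k) := add_le_add (abs_le_maxNorm _ _ _) h1
    _ = 2 * maxNorm (R k) := by ring

lemma growth_pow {n q : ℕ} {B : Matrix (Fin n) (Fin n) ℝ}
    {R : ℕ → Matrix (Fin n) (Fin n) ℝ} {i j : ℕ → Fin n}
    (h : CrossApproxSeq B q R i j) {k : ℕ} (hk : k ≤ q) :
    maxNorm (R k) ≤ 2^k * maxNorm (R 0) := by
  induction k with
  | zero => simp
  | succ k ih =>
    calc maxNorm (R (k+1)) ≤ 2 * maxNorm (R k) := maxNorm_step h (by omega)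
      _ ≤ 2 * (2^k * maxNorm (R 0)) := by linarith [ih (by omega)]
      _ = 2^(k+1) * maxNorm (R 0) := by ring

lemma growthSet_le (m : ℕ) :
    ∀ r ∈ {r | ∃ (n : ℕ) (A : Matrix (Fin n) (Fin n) ℝ)
      (R : ℕ → Matrix (Fin n) (Fin n) ℝ) (i j : ℕ → Fin n),
      m ≤ A.rank ∧ CrossApproxSeq A m R i j ∧ r = maxNorm (R m) / maxNorm A},
      r ≤ 2^m := by
  rintro r ⟨n', A', R', i', j', _, hseq, rfl⟩
  rcases eq_or_lt_of_le (maxNorm_nonneg A') with h0 | h0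
  · rw [← h0, div_zero]; positivity
  · rw [div_le_iff₀ h0]
    have := growth_pow hseq (le_refl m)
    rw [hseq.1] at this
    exact this

lemma growthSet_bddAbove (m : ℕ) :
    BddAbove {r | ∃ (n : ℕ) (A : Matrix (Fin n) (Fin n) ℝ)
      (R : ℕ → Matrix (Fin n) (Fin n) ℝ) (i j : ℕ → Fin n),
      m ≤ A.rank ∧ CrossApproxSeq A m R i j ∧ r = maxNorm (R m) / maxNorm A} :=
  ⟨2^m, fun _ hr => growthSet_le m _ hr⟩

/-- rank of an arbitrary submatrix is at most the rank -/
lemma rank_submatrix_le' {ι κ ι' κ' : Type*} [Fintype ι] [Fintype κ] [Fintype ι'] [Fintype κ']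
    [DecidableEq ι] [DecidableEq κ]
    (A : Matrix ι κ ℝ) (f : ι' → ι) (g : κ' → κ) :
    (A.submatrix f g).rank ≤ A.rank := by
  have hfac : A.submatrix f g =
      (Matrix.of fun (a : ι') (r : ι) => if r = f a then (1:ℝ) else 0) * A *
      (Matrix.of fun (r : κ) (b : κ') => if r = g b then (1:ℝ) else 0) := by
    ext a b
    rw [Matrix.mul_apply]
    have h1 : ∀ r : κ, ((Matrix.of fun (a : ι') (r : ι) => if r = f a then (1:ℝ) else 0) * A) a r *
        (Matrix.of fun (r : κ) (b : κ') => if r = g b then (1:ℝ) else 0) r b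
        = (if r = g b then ((Matrix.of fun (a : ι') (r : ι) =>
            if r = f a then (1:ℝ) else 0) * A) a r else 0) := by
      intro r; simp [Matrix.of_apply, mul_ite]
    rw [Finset.sum_congr rfl fun r _ => h1 r, Finset.sum_ite_eq' Finset.univ (g b)]
    simp [Matrix.mul_apply, ite_mul, Finset.sum_ite_eq' Finset.univ (f a)]
  rw [hfac]
  exact (Matrix.rank_mul_le_left _ _).trans (Matrix.rank_mul_le_right _ _)

end Growth

section Padding
variable {n m : ℕ} {A : Matrix (Fin n) (Fin n) ℝ} {R : ℕ → Matrix (Fin n) (Fin n) ℝ}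
  {i j : ℕ → Fin n}

lemma shifted_run (h : CrossApproxSeq A m R i j) {t : ℕ} (ht : t ≤ m) :
    CrossApproxSeq (R t) (m - t) (fun k => R (t + k)) (fun k => i (t + k))
      (fun k => j (t + k)) := by
  constructor
  · simp
  · intro k hk
    obtain ⟨h1, h2, h3⟩ := h.2 (t + k) (by omega)
    exact ⟨h1, h2, h3⟩

lemma padding (h : CrossApproxSeq A m R i j) {t : ℕ} (ht : t ≤ m) :
    maxNorm (R m) ≤ growthFactor m * maxNorm (R t) := by
  rcases eq_or_lt_of_le (maxNorm_nonneg (R t)) with hμ | hμ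
  · -- maxNorm (R t) = 0 : only possible if t = m
    rcases eq_or_lt_of_le ht with rfl | htm
    · rw [← hμ, mul_zero]
    · exfalso
      have hne := pivot_ne h htm
      have h4 : |R t (i t) (j t)| ≤ 0 := hμ ▸ abs_le_maxNorm (R t) (i t) (j t)
      exact hne (abs_eq_zero.1 (le_antisymm h4 (abs_nonneg _)))
  · -- main case
    set μ := maxNorm (R t) with hμdef
    set β := maxNorm (R m) with hβdef
    have hn : 0 < n := (i 0).pos
    set e : Fin t ⊕ Fin n ≃ Fin (t + n) := finSumFinEquiv with he
    set Dk : ℕ → Matrix (Fin t) (Fin t) ℝ := fun k =>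
      Matrix.of fun s s' => if s = s' ∧ k ≤ s.1 then μ else 0 with hDk
    set R'' : ℕ → Matrix (Fin (t + n)) (Fin (t + n)) ℝ := fun k =>
      (Matrix.fromBlocks (Dk k) 0 0 (R (max t k))).submatrix e.symm e.symm with hR''
    set i'' : ℕ → Fin (t + n) := fun k =>
      if hk : k < t then e (Sum.inl ⟨k, hk⟩) else e (Sum.inr (i k)) with hi''
    set j'' : ℕ → Fin (t + n) := fun k =>
      if hk : k < t then e (Sum.inl ⟨k, hk⟩) else e (Sum.inr (j k)) with hj''
    have hent : ∀ (k : ℕ) (p p' : Fin t ⊕ Fin n),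
        R'' k (e p) (e p') = Matrix.fromBlocks (Dk k) 0 0 (R (max t k)) p p' := by
      intro k p p'
      rw [hR'']
      simp [Matrix.submatrix_apply]
    -- the run on the padded matrix
    have hseq : CrossApproxSeq (R'' 0) m R'' i'' j'' := by
      constructor
      · rfl
      · intro k hk
        rcases Nat.lt_or_ge k t with hkt | hkt
        · -- identity-block phase
          have hik : i'' k = e (Sum.inl ⟨k, hkt⟩) := by rw [hi'']; simp [hkt]
          have hjk : j'' k = e (Sum.inl ⟨k, hkt⟩) := by rw [hj'']; simp [hkt]
          have hpivot : R'' k (i'' k) (j'' k) = μ := by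
            rw [hik, hjk, hent]
            simp [hDk, Matrix.fromBlocks_apply₁₁]
          refine ⟨by rw [hpivot]; exact ne_of_gt hμ, ?_, ?_⟩
          · intro a b
            obtain ⟨p, rfl⟩ := e.surjective a
            obtain ⟨p', rfl⟩ := e.surjective b
            rw [hpivot, hent]
            rcases p with s | s <;> rcases p' with s' | s'
            · simp only [Matrix.fromBlocks_apply₁₁, hDk, Matrix.of_apply]
              split
              · rw [abs_of_pos hμ]
              · rw [abs_of_pos hμ, abs_zero]; exact le_of_lt hμ
            · simp [abs_of_pos hμ, le_of_lt hμ]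
            · simp [abs_of_pos hμ, le_of_lt hμ]
            · simp only [Matrix.fromBlocks_apply₂₂]
              rw [abs_of_pos hμ, Nat.max_eq_left (by omega)]
              exact abs_le_maxNorm (R t) s s'
          · -- update equation
            rw [hpivot]
            ext a b
            obtain ⟨p, rfl⟩ := e.surjective a
            obtain ⟨p', rfl⟩ := e.surjective b
            have hcol : ∀ p : Fin t ⊕ Fin n, R'' k (e p) (j'' k)
                = (match p with
                  | Sum.inl s => if s.1 = k then μ else 0
                  | Sum.inr _ => 0) := by
              intro p
              rw [hjk, hent]
              rcases p with s | s
              · simp only [Matrix.fromBlocks_apply₁₁, hDk, Matrix.of_apply]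
                by_cases hsk : s.1 = k
                · have : s = ⟨k, hkt⟩ := Fin.ext hsk
                  subst this
                  simp
                · have : ¬ (s = (⟨k, hkt⟩ : Fin t)) := fun hc => hsk (by rw [hc])
                  simp [this, hsk]
              · simp
            have hrow : ∀ p : Fin t ⊕ Fin n, R'' k (i'' k) (e p)
                = (match p with
                  | Sum.inl s => if s.1 = k then μ else 0
                  | Sum.inr _ => 0) := by
              intro p
              rw [hik, hent]
              rcases p with s | s
              · simp only [Matrix.fromBlocks_apply₁₁, hDk, Matrix.of_apply]
                by_cases hsk : s.1 = k
                · have : s = ⟨k, hkt⟩ := Fin.ext hsk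
                  subst this
                  simp
                · have h1 : ¬ ((⟨k, hkt⟩ : Fin t) = s) := fun hc => hsk (by rw [← hc])
                  simp [h1, hsk]
              · simp
            rw [Matrix.sub_apply, Matrix.smul_apply, Matrix.of_apply, smul_eq_mul,
              hcol, hrow, hent, hent]
            have hmax1 : max t (k + 1) = t := by omega
            have hmax0 : max t k = t := by omega
            rcases p with s | s <;> rcases p' with s' | s'
            · simp only [Matrix.fromBlocks_apply₁₁, hDk, Matrix.of_apply]
              by_cases hs : s.1 = k <;> by_cases hs' : s'.1 = k
              · have h1 : s = s' := Fin.ext (by omega)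
                simp [hs, hs', h1, ne_of_gt hμ]
              · have h1 : ¬ (s = s') := fun hc => hs' (by rw [← hc]; exact hs)
                simp [hs, hs', h1]
              · have h1 : ¬ (s = s') := fun hc => hs (by rw [hc]; exact hs')
                simp [hs, hs', h1]
              · simp only [if_neg hs, if_neg hs', mul_zero, zero_mul, mul_zero]
                have : (s = s' ∧ k + 1 ≤ s.1) ↔ (s = s' ∧ k ≤ s.1) := by
                  constructor
                  · rintro ⟨h1, h2⟩; exact ⟨h1, by omega⟩
                  · rintro ⟨h1, h2⟩; exact ⟨h1, by omega⟩
                rw [if_congr this rfl rfl]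
                ring
            · simp
            · simp
            · simp only [Matrix.fromBlocks_apply₂₂, hmax0, hmax1]
              ring
        · -- cross-block phase
          have hik : i'' k = e (Sum.inr (i k)) := by rw [hi'']; simp [not_lt.2 hkt]
          have hjk : j'' k = e (Sum.inr (j k)) := by rw [hj'']; simp [not_lt.2 hkt]
          have hmaxk : max t k = k := by omega
          have hmaxk1 : max t (k+1) = k+1 := by omega
          have hpivot : R'' k (i'' k) (j'' k) = R k (i k) (j k) := by
            rw [hik, hjk, hent]
            simp [hmaxk]
          refine ⟨by rw [hpivot]; exact pivot_ne h hk, ?_, ?_⟩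
          · intro a b
            obtain ⟨p, rfl⟩ := e.surjective a
            obtain ⟨p', rfl⟩ := e.surjective b
            rw [hpivot, hent]
            have hpv : (0:ℝ) < |R k (i k) (j k)| := abs_pos.2 (pivot_ne h hk)
            rcases p with s | s <;> rcases p' with s' | s'
            · simp only [Matrix.fromBlocks_apply₁₁, hDk, Matrix.of_apply]
              have : ¬ (s = s' ∧ k ≤ s.1) := by
                rintro ⟨_, h2⟩; omega
              rw [if_neg this, abs_zero]
              exact le_of_lt hpv
            · simpa using le_of_lt hpv
            · simpa using le_of_lt hpv
            · simp only [Matrix.fromBlocks_apply₂₂, hmaxk]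
              exact pivot_max h hk s s'
          · rw [hpivot]
            ext a b
            obtain ⟨p, rfl⟩ := e.surjective a
            obtain ⟨p', rfl⟩ := e.surjective b
            have hcol : ∀ p : Fin t ⊕ Fin n, R'' k (e p) (j'' k)
                = (match p with
                  | Sum.inl _ => (0:ℝ)
                  | Sum.inr s => R k s (j k)) := by
              intro p
              rw [hjk, hent]
              rcases p with s | s
              · simp
              · simp [hmaxk]
            have hrow : ∀ p : Fin t ⊕ Fin n, R'' k (i'' k) (e p)
                = (match p with
                  | Sum.inl _ => (0:ℝ)
                  | Sum.inr s => R k (i k) s) := by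
              intro p
              rw [hik, hent]
              rcases p with s | s
              · simp
              · simp [hmaxk]
            rw [Matrix.sub_apply, Matrix.smul_apply, Matrix.of_apply, smul_eq_mul,
              hcol, hrow, hent, hent]
            rcases p with s | s <;> rcases p' with s' | s'
            · simp only [Matrix.fromBlocks_apply₁₁, hDk, Matrix.of_apply]
              have h1 : ¬ (s = s' ∧ k + 1 ≤ s.1) := by rintro ⟨_, h2⟩; omega
              have h0 : ¬ (s = s' ∧ k ≤ s.1) := by rintro ⟨_, h2⟩; omega
              simp [h1, h0]
              intro hss hks; exact absurd ⟨hss, by omega⟩ h0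
            · simp
            · simp
            · simp only [Matrix.fromBlocks_apply₂₂, hmaxk, hmaxk1]
              rw [step_eq h hk]
    -- rank of the padded matrix
    have hrank'' : m ≤ (R'' 0).rank := by
      set f : Fin t ⊕ Fin (m - t) → Fin (t + n) :=
        Sum.elim (fun s => e (Sum.inl s)) (fun s => e (Sum.inr (i (t + s.1)))) with hf
      set g : Fin t ⊕ Fin (m - t) → Fin (t + n) :=
        Sum.elim (fun s => e (Sum.inl s)) (fun s => e (Sum.inr (j (t + s.1)))) with hg
      set P' : Matrix (Fin (m - t)) (Fin (m - t)) ℝ :=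
        (R t).submatrix (fun s : Fin (m - t) => i (t + s.1)) (fun s : Fin (m - t) => j (t + s.1))
        with hP'
      have hSeq : (R'' 0).submatrix f g = Matrix.fromBlocks
          (μ • (1 : Matrix (Fin t) (Fin t) ℝ)) 0 0 P' := by
        ext p p'
        rcases p with s | s <;> rcases p' with s' | s'
        · simp only [Matrix.submatrix_apply, hf, hg, Sum.elim_inl]
          rw [hent]
          simp only [Matrix.fromBlocks_apply₁₁, hDk, Matrix.of_apply]
          by_cases hss : s = s'
          · simp [hss, Matrix.one_apply]
          · simp [hss, Matrix.one_apply]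
        · simp only [Matrix.submatrix_apply, hf, hg, Sum.elim_inl, Sum.elim_inr]
          rw [hent]
          simp
        · simp only [Matrix.submatrix_apply, hf, hg, Sum.elim_inl, Sum.elim_inr]
          rw [hent]
          simp
        · simp only [Matrix.submatrix_apply, hf, hg, Sum.elim_inr]
          rw [hent]
          simp [hP', Nat.max_eq_left (by omega : (0:ℕ) ≤ t)]
      have hP'det : IsUnit P'.det := pivot_submatrix_isUnit (shifted_run h ht)
      have hdet : IsUnit ((R'' 0).submatrix f g).det := by
        rw [hSeq, Matrix.det_fromBlocks_zero₂₁]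
        refine IsUnit.mul ?_ hP'det
        rw [Matrix.det_smul, Matrix.det_one, mul_one]
        exact isUnit_iff_ne_zero.2 (pow_ne_zero _ (ne_of_gt hμ))
      have := Matrix.rank_of_isUnit _ ((Matrix.isUnit_iff_isUnit_det _).2 hdet)
      have hcard : Fintype.card (Fin t ⊕ Fin (m - t)) = m := by
        simp [Fintype.card_sum]; omega
      calc m = ((R'' 0).submatrix f g).rank := by rw [this, hcard]
        _ ≤ (R'' 0).rank := rank_submatrix_le' _ _ _
    -- maxNorm computations
    have hmax0 : maxNorm (R'' 0) = μ := by
      refine le_antisymm (maxNorm_le _ (le_of_lt hμ) fun a b => ?_) ?_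
      · obtain ⟨p, rfl⟩ := e.surjective a
        obtain ⟨p', rfl⟩ := e.surjective b
        rw [hent]
        rcases p with s | s <;> rcases p' with s' | s'
        · simp only [Matrix.fromBlocks_apply₁₁, hDk, Matrix.of_apply]
          split
          · rw [abs_of_pos hμ]
          · rw [abs_zero]; exact le_of_lt hμ
        · simpa using le_of_lt hμ
        · simpa using le_of_lt hμ
        · simp only [Matrix.fromBlocks_apply₂₂, Nat.max_eq_left (by omega : (0:ℕ) ≤ t)]
          exact abs_le_maxNorm (R t) s s'
      · obtain ⟨a1, b1, hab⟩ := exists_maxNorm_eq (R t) hn hn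
        have : R'' 0 (e (Sum.inr a1)) (e (Sum.inr b1)) = R t a1 b1 := by
          rw [hent]
          simp [Nat.max_eq_left (by omega : (0:ℕ) ≤ t)]
        calc μ = |R'' 0 (e (Sum.inr a1)) (e (Sum.inr b1))| := by rw [this, ← hab]
          _ ≤ maxNorm (R'' 0) := abs_le_maxNorm _ _ _
    have hmaxm : maxNorm (R'' m) = β := by
      have hβ0 : 0 ≤ β := maxNorm_nonneg _
      refine le_antisymm (maxNorm_le _ hβ0 fun a b => ?_) ?_
      · obtain ⟨p, rfl⟩ := e.surjective a
        obtain ⟨p', rfl⟩ := e.surjective b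
        rw [hent]
        rcases p with s | s <;> rcases p' with s' | s'
        · simp only [Matrix.fromBlocks_apply₁₁, hDk, Matrix.of_apply]
          have : ¬ (s = s' ∧ m ≤ s.1) := by rintro ⟨_, h2⟩; have := s.2; omega
          rw [if_neg this, abs_zero]; exact hβ0
        · simpa using hβ0
        · simpa using hβ0
        · simp only [Matrix.fromBlocks_apply₂₂, Nat.max_eq_right ht]
          exact abs_le_maxNorm (R m) s s'
      · obtain ⟨a1, b1, hab⟩ := exists_maxNorm_eq (R m) hn hn
        have : R'' m (e (Sum.inr a1)) (e (Sum.inr b1)) = R m a1 b1 := by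
          rw [hent]
          simp [Nat.max_eq_right ht]
        calc β = |R'' m (e (Sum.inr a1)) (e (Sum.inr b1))| := by rw [this, ← hab]
          _ ≤ maxNorm (R'' m) := abs_le_maxNorm _ _ _
    -- conclude
    have hmem : β / μ ∈ {r | ∃ (n : ℕ) (A : Matrix (Fin n) (Fin n) ℝ)
        (R : ℕ → Matrix (Fin n) (Fin n) ℝ) (i j : ℕ → Fin n),
        m ≤ A.rank ∧ CrossApproxSeq A m R i j ∧ r = maxNorm (R m) / maxNorm A} := by
      exact ⟨t + n, R'' 0, R'', i'', j'', hrank'', hseq, by rw [hmax0, hmaxm]⟩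
    have hle : β / μ ≤ growthFactor m := le_csSup (growthSet_bddAbove m) hmem
    calc β = (β / μ) * μ := by field_simp
      _ ≤ growthFactor m * μ := mul_le_mul_of_nonneg_right hle (le_of_lt hμ)

end Padding

/-- The approximation numbers: `γ_k(A) = min {‖E‖_max : rank (A + E) ≤ k}`. -/
noncomputable def gammaAp {n : ℕ} (A : Matrix (Fin n) (Fin n) ℝ) (k : ℕ) : ℝ :=
  sInf {c | ∃ E : Matrix (Fin n) (Fin n) ℝ, (A + E).rank ≤ k ∧ c = maxNorm E}

/-- Error bound for cross approximation with complete pivoting, with the best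
approximation error measured in the max-norm:
`‖A − A(:,J)A(I,J)⁻¹A(I,:)‖_max ≤ 2^(2m+1) · ρ_m · γ_m(A)`. -/
theorem crossApprox_error_bound_maxNorm {n m : ℕ} (hmn : m < n)
    (A : Matrix (Fin n) (Fin n) ℝ) (hrank : m ≤ A.rank)
    (R : ℕ → Matrix (Fin n) (Fin n) ℝ) (i j : ℕ → Fin n)
    (halg : CrossApproxSeq A m R i j) :
    maxNorm (A -
        A.submatrix id (fun t : Fin m => j t.1) *
          (A.submatrix (fun t : Fin m => i t.1) (fun t : Fin m => j t.1))⁻¹ *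
          A.submatrix (fun t : Fin m => i t.1) id) ≤
      2 ^ (2 * m + 1) * growthFactor m * gammaAp A m := by
  have hn : 0 < n := lt_of_le_of_lt (Nat.zero_le m) hmn
  have hG1 : A - A.submatrix id (fun t : Fin m => j t.1) *
      (A.submatrix (fun t : Fin m => i t.1) (fun t : Fin m => j t.1))⁻¹ *
      A.submatrix (fun t : Fin m => i t.1) id = R m := by
    rw [cross_identity halg, sub_sub_cancel]
  rw [hG1]
  set β := maxNorm (R m) with hβ
  set ρ := growthFactor m with hρ
  -- gamma set facts
  have hγne : {c | ∃ E : Matrix (Fin n) (Fin n) ℝ, (A + E).rank ≤ m ∧ c = maxNorm E}.Nonempty := by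
    refine ⟨maxNorm (-A), -A, ?_, rfl⟩
    simp [Matrix.rank_zero]
  have hγnonneg : 0 ≤ gammaAp A m := by
    refine le_csInf hγne ?_
    rintro c ⟨E, _, rfl⟩
    exact maxNorm_nonneg E
  have hρ0 : 0 ≤ ρ := by
    have hmem : β / maxNorm A ∈ {r | ∃ (n : ℕ) (A : Matrix (Fin n) (Fin n) ℝ)
        (R : ℕ → Matrix (Fin n) (Fin n) ℝ) (i j : ℕ → Fin n),
        m ≤ A.rank ∧ CrossApproxSeq A m R i j ∧ r = maxNorm (R m) / maxNorm A} :=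
      ⟨n, A, R, i, j, hrank, halg, rfl⟩
    have h1 : β / maxNorm A ≤ ρ := le_csSup (growthSet_bddAbove m) hmem
    have h2 : 0 ≤ β / maxNorm A := div_nonneg (maxNorm_nonneg _) (maxNorm_nonneg _)
    linarith
  rcases eq_or_lt_of_le (maxNorm_nonneg (R m)) with hβ0 | hβ0
  · -- degenerate case β = 0
    rw [hβ, ← hβ0]
    positivity
  -- main case
  have hρ1 : 1 ≤ ρ := by
    have := padding halg (le_refl m)
    rw [← hβ] at this
    nlinarith
  obtain ⟨a0, b0, hab⟩ := exists_maxNorm_eq (R m) hn hn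
  set idxN : ℕ → Fin n := fun s => if hs : s < m then i s else a0 with hidxN
  set jdxN : ℕ → Fin n := fun s => if hs : s < m then j s else b0 with hjdxN
  set pvN : ℕ → ℝ := fun r => R r (idxN r) (jdxN r) with hpvN
  have hidx_lt : ∀ s < m, idxN s = i s := fun s hs => by rw [hidxN]; simp [hs]
  have hjdx_lt : ∀ s < m, jdxN s = j s := fun s hs => by rw [hjdxN]; simp [hs]
  have hidx_m : idxN m = a0 := by rw [hidxN]; simp
  have hjdx_m : jdxN m = b0 := by rw [hjdxN]; simp
  have hpv_m : pvN m = R m a0 b0 := by rw [hpvN]; simp [hidx_m, hjdx_m]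
  have hpv_lt : ∀ r < m, pvN r = R r (i r) (j r) := fun r hr => by
    rw [hpvN]; simp [hidx_lt r hr, hjdx_lt r hr]
  -- lower bound on the pivots
  have hpv_lb : ∀ r ≤ m, β ≤ ρ * |pvN r| := by
    intro r hr
    rcases eq_or_lt_of_le hr with rfl | hrm
    · rw [hpv_m, ← hab]
      nlinarith
    · have h1 : maxNorm (R r) = |pvN r| := by
        refine le_antisymm (maxNorm_le _ (abs_nonneg _) fun a b => ?_) ?_
        · rw [hpv_lt r hrm]; exact pivot_max halg hrm a b
        · rw [hpv_lt r hrm]; exact abs_le_maxNorm _ _ _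
      have := padding halg (le_of_lt hrm)
      rw [← hβ, h1] at this
      exact this
  have hρpos : 0 < ρ := lt_of_lt_of_le one_pos hρ1
  have hpv_pos : ∀ r ≤ m, 0 < |pvN r| := by
    intro r hr
    have := hpv_lb r hr
    nlinarith
  have hpv_ne : ∀ r ≤ m, pvN r ≠ 0 := fun r hr => abs_pos.1 (hpv_pos r hr)
  -- the scalar LU identity
  set Lf : ℕ → ℕ → ℝ := fun s r => (pvN r)⁻¹ * R r (idxN s) (jdxN r) with hLf
  set Uf : ℕ → ℕ → ℝ := fun r t' => R r (idxN r) (jdxN t') with hUf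
  have hLU : ∀ s ≤ m, ∀ t' ≤ m,
      A (idxN s) (jdxN t') = ∑ r ∈ Finset.range (m+1), Lf s r * Uf r t' := by
    intro s hs t' ht'
    have htel := telescope halg (le_refl m) (idxN s) (jdxN t')
    rw [Finset.sum_range_succ]
    have hsum : ∑ r ∈ Finset.range m, Lf s r * Uf r t'
        = ∑ r ∈ Finset.range m, (R r (i r) (j r))⁻¹ * (R r (idxN s) (j r) * R r (i r) (jdxN t')) := by
      refine Finset.sum_congr rfl fun r hr => ?_
      rw [Finset.mem_range] at hr
      simp only [hLf, hUf]
      rw [hpv_lt r hr, hidx_lt r hr, hjdx_lt r hr]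
      ring
    rw [hsum]
    have hlast : Lf s m * Uf m t' = R m (idxN s) (jdxN t') := by
      simp only [hLf, hUf]
      rw [hpv_m, hidx_m, hjdx_m]
      by_cases hsm : s < m
      · rw [hidx_lt s hsm]
        rw [row_zero halg hsm (le_refl m), row_zero halg hsm (le_refl m)]
        ring
      · have hsm' : s = m := by omega
        subst hsm'
        rw [hidx_m]
        have hne : R s a0 b0 ≠ 0 := by
          have := hpv_ne s le_rfl
          rwa [hpv_m] at this
        rw [mul_assoc] at *
        rw [← mul_assoc]
        rw [inv_mul_cancel₀ hne, one_mul]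
    rw [hlast]
    linarith
  -- reduce to the key pointwise bound over the gamma set
  have hK : (0:ℝ) < 2^(2*m+1) * ρ := by positivity
  have hkey : ∀ c ∈ {c | ∃ E : Matrix (Fin n) (Fin n) ℝ, (A + E).rank ≤ m ∧ c = maxNorm E},
      β ≤ 2^(2*m+1) * ρ * c := by
    rintro c ⟨E, hrkE, rfl⟩
    set c := maxNorm E with hc
    have hc0 : 0 ≤ c := maxNorm_nonneg E
    -- the bordered submatrix of A + E is singular
    set M' : Matrix (Fin (m+1)) (Fin (m+1)) ℝ :=
      (A + E).submatrix (fun s : Fin (m+1) => idxN s.1) (fun s : Fin (m+1) => jdxN s.1) with hM'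
    have hdet : M'.det = 0 := by
      by_contra hd
      have hunit : IsUnit M' := (Matrix.isUnit_iff_isUnit_det _).2 (isUnit_iff_ne_zero.2 hd)
      have h1 : M'.rank = m + 1 := by
        rw [Matrix.rank_of_isUnit _ hunit, Fintype.card_fin]
      have h2 : M'.rank ≤ (A + E).rank := rank_submatrix_le' _ _ _
      omega
    obtain ⟨v, hv0, hvM⟩ := Matrix.exists_mulVec_eq_zero_iff.2 hdet
    set xv : ℕ → ℝ := fun s => if hs : s < m + 1 then v ⟨s, hs⟩ else 0 with hxv
    set X := ∑ s ∈ Finset.range (m+1), |xv s| with hX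
    have hXpos : 0 < X := by
      obtain ⟨s0, hs0⟩ := Function.ne_iff.1 hv0
      refine Finset.sum_pos' (fun s _ => abs_nonneg _) ⟨s0.1, Finset.mem_range.2 s0.2, ?_⟩
      rw [hxv]
      simp only [s0.2, dif_pos]
      rw [Fin.eta]
      exact abs_pos.2 hs0
    have hrow : ∀ s < m + 1,
        ∑ t' ∈ Finset.range (m+1), (A + E) (idxN s) (jdxN t') * xv t' = 0 := by
      intro s hs
      have h1 : Matrix.mulVec M' v ⟨s, hs⟩ = 0 := by rw [hvM]; rfl
      rw [Matrix.mulVec, dotProduct] at h1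
      rw [← h1, ← Fin.sum_univ_eq_sum_range
        (fun t' => (A + E) (idxN s) (jdxN t') * xv t') (m+1)]
      refine Finset.sum_congr rfl fun t' _ => ?_
      rw [hM']
      simp only [Matrix.submatrix_apply]
      congr 1
      rw [hxv]
      simp only [t'.2, dif_pos, Fin.eta]
    set zv : ℕ → ℝ := fun s => ∑ q ∈ Finset.range (m+1), Uf s q * xv q with hzv
    set yv : ℕ → ℝ := fun s => -∑ t' ∈ Finset.range (m+1), E (idxN s) (jdxN t') * xv t' with hyv
    have hy : ∀ r < m + 1, ∑ t' ∈ Finset.range (m+1), Lf r t' * zv t' = yv r := by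
      intro r hr
      calc ∑ t' ∈ Finset.range (m+1), Lf r t' * zv t'
          = ∑ t' ∈ Finset.range (m+1), ∑ q ∈ Finset.range (m+1),
              Lf r t' * (Uf t' q * xv q) := by
            refine Finset.sum_congr rfl fun t' _ => ?_
            simp only [hzv]
            rw [Finset.mul_sum]
        _ = ∑ q ∈ Finset.range (m+1), ∑ t' ∈ Finset.range (m+1),
              Lf r t' * (Uf t' q * xv q) := Finset.sum_comm
        _ = ∑ q ∈ Finset.range (m+1),
              (∑ t' ∈ Finset.range (m+1), Lf r t' * Uf t' q) * xv q := by
            refine Finset.sum_congr rfl fun q _ => ?_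
            rw [Finset.sum_mul]
            exact Finset.sum_congr rfl fun t' _ => by ring
        _ = ∑ q ∈ Finset.range (m+1), A (idxN r) (jdxN q) * xv q := by
            refine Finset.sum_congr rfl fun q hq => ?_
            rw [Finset.mem_range] at hq
            rw [← hLU r (by omega) q (by omega)]
        _ = ∑ q ∈ Finset.range (m+1),
              ((A + E) (idxN r) (jdxN q) * xv q - E (idxN r) (jdxN q) * xv q) := by
            refine Finset.sum_congr rfl fun q _ => ?_
            rw [Matrix.add_apply]
            ring
        _ = yv r := by
            rw [Finset.sum_sub_distrib, hrow r hr, hyv]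
            ring
    have hybd : ∀ r < m + 1, |yv r| ≤ c * X := by
      intro r hr
      simp only [hyv, abs_neg]
      refine (Finset.abs_sum_le_sum_abs _ _).trans ?_
      rw [hX, Finset.mul_sum]
      refine Finset.sum_le_sum fun t' _ => ?_
      rw [abs_mul]
      exact mul_le_mul_of_nonneg_right (abs_le_maxNorm E _ _) (abs_nonneg _)
    -- forward substitution
    have hzbd : ∀ r < m + 1, |zv r| ≤ 2^r * (c * X) := by
      refine forward_bound (m+1) Lf zv yv (c * X)
        (mul_nonneg hc0 (le_of_lt hXpos)) ?_ ?_ ?_ hy hybd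
      · intro r hr
        simp only [hLf]
        exact inv_mul_cancel₀ (hpv_ne r (by omega))
      · intro r t' hrt' ht'
        simp only [hLf]
        have h1 : R t' (idxN r) (jdxN t') = 0 := by
          rw [hidx_lt r (by omega)]
          exact row_zero halg hrt' (by omega) _
        rw [h1, mul_zero]
      · intro r t' hr ht'
        simp only [hLf]
        rw [abs_mul, abs_inv]
        rw [inv_mul_le_iff₀ (hpv_pos t' (by omega)), mul_one]
        rcases Nat.lt_or_ge t' m with h2 | h2
        · rw [hpv_lt t' h2, hjdx_lt t' h2]
          exact pivot_max halg h2 _ _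
        · have ht'm : t' = m := by omega
          subst ht'm
          rw [hpv_m, ← hab, hjdx_m]
          exact abs_le_maxNorm _ _ _
    -- backward substitution
    have hxbd : ∀ s < m + 1, |xv s| ≤ |zv s| / |pvN s|
        + ∑ q ∈ Finset.Ioo s (m+1), 2^(q - s - 1) * (|zv q| / |pvN q|) := by
      refine backward_bound (m+1) Uf pvN xv zv ?_ ?_ ?_ (fun s hs => hpv_ne s (by omega))
        (fun s hs => by simp only [hzv])
      · intro s q hqs hs
        simp only [hUf]
        have h1 : R s (idxN s) (jdxN q) = 0 := by
          rw [hjdx_lt q (by omega)]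
          exact col_zero halg hqs (by omega) _
        exact h1
      · intro s hs
        simp only [hUf, hpvN]
      · intro s q hs hq
        simp only [hUf]
        rcases Nat.lt_or_ge s m with h2 | h2
        · rw [hpv_lt s h2]
          exact pivot_max halg h2 _ _
        · have hsm : s = m := by omega
          subst hsm
          rw [hpv_m, ← hab, hidx_m]
          exact abs_le_maxNorm _ _ _
    have htotal : X ≤ ∑ q ∈ Finset.range (m+1), 2^q * (|zv q| / |pvN q|) :=
      total_bound (m+1) pvN xv zv hxbd
    -- combine
    have hterm : ∀ q ∈ Finset.range (m+1),
        2^q * (|zv q| / |pvN q|) ≤ 4^q * (c * X * (ρ / β)) := by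
      intro q hq
      rw [Finset.mem_range] at hq
      have h1 : |zv q| ≤ 2^q * (c * X) := hzbd q hq
      have h2 : (|pvN q|)⁻¹ ≤ ρ / β := by
        have h3 : β / ρ ≤ |pvN q| := by
          rw [div_le_iff₀ hρpos]
          have := hpv_lb q (by omega)
          linarith [this]
        have h4 : 0 < β / ρ := div_pos hβ0 hρpos
        calc (|pvN q|)⁻¹ ≤ (β / ρ)⁻¹ := inv_anti₀ h4 h3
          _ = ρ / β := by rw [inv_div]
      calc 2^q * (|zv q| / |pvN q|) = 2^q * (|zv q| * (|pvN q|)⁻¹) := by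
            rw [div_eq_mul_inv]
        _ ≤ 2^q * ((2^q * (c * X)) * (ρ / β)) := by
            refine mul_le_mul_of_nonneg_left ?_ (by positivity)
            refine mul_le_mul h1 h2 (by positivity) (by positivity)
        _ = (2^q * 2^q) * (c * X * (ρ / β)) := by ring
        _ = 4^q * (c * X * (ρ / β)) := by
            rw [← mul_pow]
            norm_num
    have h6 : X ≤ (∑ q ∈ Finset.range (m+1), (4:ℝ)^q) * (c * X * (ρ / β)) := by
      rw [Finset.sum_mul]
      exact htotal.trans (Finset.sum_le_sum hterm)
    have h7 : X ≤ (2 * 4^m) * (c * X * (ρ / β)) := by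
      refine h6.trans (mul_le_mul_of_nonneg_right (sum_pow_four_le m) (by positivity))
    have hβne : β ≠ 0 := ne_of_gt hβ0
    have h8 : X * β ≤ X * (2 * 4^m * ρ * c) := by
      have h9 := mul_le_mul_of_nonneg_right h7 (le_of_lt hβ0)
      calc X * β ≤ (2 * 4^m) * (c * X * (ρ / β)) * β := h9
        _ = X * (2 * 4^m * ρ * c) := by field_simp
    have h10 : β ≤ 2 * 4^m * ρ * c := le_of_mul_le_mul_left (by linarith [h8]) hXpos
    have hpow : (2:ℝ)^(2*m+1) = 2 * 4^m := by
      rw [pow_succ, pow_mul]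
      norm_num
      ring
    rw [hpow]
    calc β ≤ 2 * 4^m * ρ * c := h10
      _ = 2 * 4^m * (ρ * c) := by ring
      _ = 2 * 4^m * ρ * c := by ring
  -- conclude via the infimum
  have h11 : β / (2^(2*m+1) * ρ) ≤ gammaAp A m := by
    refine le_csInf hγne ?_
    intro c hc
    rw [div_le_iff₀ hK]
    calc β ≤ 2^(2*m+1) * ρ * c := hkey c hc
      _ = c * (2^(2*m+1) * ρ) := by ring
  rw [div_le_iff₀ hK] at h11
  calc β ≤ gammaAp A m * (2^(2*m+1) * ρ) := h11
    _ = 2^(2*m+1) * ρ * gammaAp A m := by ring
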